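/- Let 0 ≤ δ ≤ 1 and let η > (1 − δ)/2. Then there exists a constant C > 0 such that for all sequences a, b : ℕ → [0, ∞) one has ∑_{n≥0} ∑_{m≥0} a_n b_m / ⟨n − m⟩^δ ≤ C · (∑_{n≥0} ⟨n⟩^{2η} a_n²)^{1/2} · (∑_{m≥0} ⟨m⟩^{2η} b_m²)^{1/2}, where both sides are interpreted as values in [0, ∞]. -/

import Mathlib

set_option maxHeartbeats 1000000

open Finset

lemma bern {q x : ℝ} (hq : 0 < q) (hx0 : 0 ≤ x) (hx1 : x < 1) :
    1 + q * x ≤ (1 - x) ^ (-q) := by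
  have h0 : (0:ℝ) < 1 - x := by linarith
  have h1 : (1 - x) ^ q ≤ Real.exp (-x) ^ q :=
    Real.rpow_le_rpow h0.le (by linarith [Real.add_one_le_exp (-x)]) hq.le
  have h2 : Real.exp (-x) ^ q = Real.exp (-(q * x)) := by
    rw [← Real.exp_mul]; ring_nf
  have h3 : 1 + q * x ≤ Real.exp (q * x) := by
    linarith [Real.add_one_le_exp (q * x)]
  have h4 : (1 - x) ^ (-q) = ((1 - x) ^ q)⁻¹ := by
    rw [Real.rpow_neg h0.le]
  rw [h4]
  have h5 : (1 - x) ^ q ≤ (1 + q * x)⁻¹ := by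
    have : Real.exp (-(q * x)) ≤ (1 + q * x)⁻¹ := by
      rw [Real.exp_neg]
      apply inv_anti₀ (by positivity) h3
    calc (1-x)^q ≤ Real.exp (-x) ^ q := h1
      _ = Real.exp (-(q*x)) := h2
      _ ≤ (1 + q*x)⁻¹ := this
  calc (1:ℝ) + q * x = ((1 + q*x)⁻¹)⁻¹ := by rw [inv_inv]
    _ ≤ ((1-x)^q)⁻¹ := by
        apply inv_anti₀ (by positivity) h5

lemma tele_tail {p a : ℝ} (hp : 1 < p) (ha : 0 < a) :
    (p - 1) * (a + 1) ^ (-p) ≤ a ^ (1 - p) - (a + 1) ^ (1 - p) := by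
  set q := p - 1 with hqdef
  have hq : 0 < q := by simp [hqdef]; linarith
  have ha1 : (0:ℝ) < a + 1 := by linarith
  set x := 1 / (a + 1) with hxdef
  have hx0 : 0 < x := by positivity
  have hx1 : x < 1 := by rw [hxdef, div_lt_one ha1]; linarith
  have h1x : 1 - x = a / (a + 1) := by rw [hxdef]; field_simp; ring
  have hb := bern hq hx0.le hx1
  rw [h1x] at hb
  have hdiv : (a / (a + 1)) ^ (-q) = a ^ (-q) * (a + 1) ^ q := by
    rw [Real.div_rpow ha.le ha1.le, Real.rpow_neg ha1.le]
    rw [div_eq_mul_inv, inv_inv]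
  rw [hdiv] at hb
  -- multiply by (a+1)^(-q)
  have hposq : (0:ℝ) < (a + 1) ^ (-q) := Real.rpow_pos_of_pos ha1 _
  have hmul := mul_le_mul_of_nonneg_right hb hposq.le
  have hqq : (a + 1) ^ q * (a + 1) ^ (-q) = 1 := by
    rw [← Real.rpow_add ha1]; simp
  have hxq : x * (a + 1) ^ (-q) = (a + 1) ^ (-p) := by
    rw [hxdef, one_div, ← Real.rpow_neg_one (a+1), ← Real.rpow_add ha1]
    ring_nf
    rw [hqdef]; ring_nf
  rw [mul_assoc, hqq, mul_one, add_mul, one_mul, mul_assoc, hxq] at hmul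
  have e1 : a ^ (1 - p) = a ^ (-q) := by rw [hqdef]; ring_nf
  have e2 : (a + 1) ^ (1 - p) = (a + 1) ^ (-q) := by rw [hqdef]; ring_nf
  rw [e1, e2]
  linarith

lemma tele_head {p a : ℝ} (hp0 : 0 ≤ p) (hp1 : p < 1) (ha : 0 ≤ a) :
    (1 - p) * (a + 1) ^ (-p) ≤ (a + 1) ^ (1 - p) - a ^ (1 - p) := by
  set q := 1 - p with hqdef
  have hq : 0 < q := by simp [hqdef]; linarith
  have ha1 : (0:ℝ) < a + 1 := by linarith
  set s := a / (a + 1) with hsdef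
  have hs0 : 0 ≤ s := by positivity
  have hgm := Real.geom_mean_le_arith_mean2_weighted hp0 hq.le zero_le_one hs0
    (by rw [hqdef]; ring : p + q = 1)
  rw [Real.one_rpow, one_mul, mul_one] at hgm
  -- hgm : s ^ q ≤ p + q * s
  have hsq : s ^ q * (a + 1) ^ q = a ^ q := by
    rw [← Real.mul_rpow hs0 ha1.le, hsdef]
    congr 1
    field_simp
  have hu : (0:ℝ) < (a + 1) ^ (q - 1) := Real.rpow_pos_of_pos ha1 _
  have hs1 : s * (a + 1) ^ q = a * (a + 1) ^ (q - 1) := by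
    rw [hsdef, div_eq_mul_inv, mul_assoc]
    congr 1
    rw [← Real.rpow_neg_one (a + 1), ← Real.rpow_add ha1]
    ring_nf
  have hsplit : (a + 1) ^ q = (a + 1) * (a + 1) ^ (q - 1) := by
    nth_rewrite 1 [show q = 1 + (q - 1) by ring]
    rw [Real.rpow_add ha1, Real.rpow_one]
  have key : a ^ q ≤ (p + q * s) * (a + 1) ^ q :=
    hsq ▸ mul_le_mul_of_nonneg_right hgm (Real.rpow_pos_of_pos ha1 q).le
  rw [add_mul, mul_assoc, hs1] at key
  have hneg : (a + 1) ^ (-p) = (a + 1) ^ (q - 1) := by rw [hqdef]; ring_nf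
  rw [hneg]
  rw [hsplit] at key ⊢
  have hpq : p = 1 - q := by rw [hqdef]; ring
  rw [hpq] at key
  nlinarith [hu]

lemma head_sum {p : ℝ} (hp0 : 0 ≤ p) (hp1 : p < 1) (N : ℕ) :
    ∑ m ∈ Finset.range (N + 1), (1 + (m:ℝ)) ^ (-p) ≤ (1 + (N:ℝ)) ^ (1 - p) / (1 - p) := by
  have hq : 0 < 1 - p := by linarith
  have step : ∀ m : ℕ, (1 + (m:ℝ)) ^ (-p)
      ≤ (((m:ℝ) + 1) ^ (1 - p) - ((m:ℝ)) ^ (1 - p)) / (1 - p) := by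
    intro m
    rw [le_div_iff₀ hq, mul_comm]
    have := tele_head hp0 hp1 (Nat.cast_nonneg m : (0:ℝ) ≤ m)
    calc (1 - p) * (1 + (m:ℝ)) ^ (-p) = (1 - p) * ((m:ℝ) + 1) ^ (-p) := by ring_nf
      _ ≤ ((m:ℝ) + 1) ^ (1 - p) - ((m:ℝ)) ^ (1 - p) := this
  calc ∑ m ∈ Finset.range (N + 1), (1 + (m:ℝ)) ^ (-p)
      ≤ ∑ m ∈ Finset.range (N + 1),
          ((((m:ℝ) + 1) ^ (1 - p) - ((m:ℝ)) ^ (1 - p)) / (1 - p)) :=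
        Finset.sum_le_sum fun m _ => step m
    _ = (((N + 1 : ℕ):ℝ) ^ (1 - p) - ((0:ℕ):ℝ) ^ (1 - p)) / (1 - p) := by
        rw [← Finset.sum_div]
        congr 1
        have := Finset.sum_range_sub (fun i : ℕ => ((i:ℝ)) ^ (1 - p)) (N + 1)
        simpa using this
    _ = (1 + (N:ℝ)) ^ (1 - p) / (1 - p) := by
        rw [Nat.cast_zero, Real.zero_rpow (by linarith), Nat.cast_add, Nat.cast_one]
        ring_nf

lemma tail_sum {p : ℝ} (hp : 1 < p) (N : ℕ) (s : Finset ℕ) (hs : ∀ m ∈ s, N ≤ m) :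
    ∑ m ∈ s, (1 + (m:ℝ)) ^ (-p) ≤ (1 + 1 / (p - 1)) * (1 + (N:ℝ)) ^ (1 - p) := by
  obtain ⟨M, hM⟩ := s.exists_nat_subset_range
  have hsub : s ⊆ Finset.Ico N M := by
    intro m hm
    exact Finset.mem_Ico.2 ⟨hs m hm, Finset.mem_range.1 (hM hm)⟩
  have h1 : ∑ m ∈ s, (1 + (m:ℝ)) ^ (-p) ≤ ∑ m ∈ Finset.Ico N M, (1 + (m:ℝ)) ^ (-p) :=
    Finset.sum_le_sum_of_subset_of_nonneg hsub (fun m _ _ => by positivity)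
  have hq : 0 < p - 1 := by linarith
  have hN1 : (1:ℝ) ≤ 1 + (N:ℝ) := by
    have : (0:ℝ) ≤ (N:ℝ) := Nat.cast_nonneg N
    linarith
  have hbase : (1 + (N:ℝ)) ^ (-p) ≤ (1 + (N:ℝ)) ^ (1 - p) :=
    Real.rpow_le_rpow_of_exponent_le hN1 (by linarith)
  have h2 : ∑ m ∈ Finset.Ico N M, (1 + (m:ℝ)) ^ (-p)
      ≤ (1 + (N:ℝ)) ^ (-p) + (1 + (N:ℝ)) ^ (1 - p) / (p - 1) := by
    rcases le_or_gt M N with h | h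
    · rw [Finset.Ico_eq_empty (by omega)]
      have : (0:ℝ) ≤ (1 + (N:ℝ)) ^ (-p) := by positivity
      have : (0:ℝ) ≤ (1 + (N:ℝ)) ^ (1 - p) / (p - 1) := by positivity
      simp only [Finset.sum_empty]
      positivity
    · obtain ⟨k, hk⟩ : ∃ k, M - N = k + 1 := ⟨M - N - 1, by omega⟩
      rw [Finset.sum_Ico_eq_sum_range, hk, Finset.sum_range_succ']
      have tele : ∑ i ∈ Finset.range k, (1 + ((N + (i + 1) : ℕ):ℝ)) ^ (-p)
          ≤ (1 + (N:ℝ)) ^ (1 - p) / (p - 1) := by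
        have step : ∀ i : ℕ, (1 + ((N + (i + 1) : ℕ):ℝ)) ^ (-p)
            ≤ ((1 + ((N + i : ℕ):ℝ)) ^ (1 - p) - (1 + ((N + (i + 1) : ℕ):ℝ)) ^ (1 - p)) / (p - 1) := by
          intro i
          rw [le_div_iff₀ hq, mul_comm]
          have ha : (0:ℝ) < 1 + ((N + i : ℕ):ℝ) := by positivity
          have := tele_tail hp ha
          have e1 : (1 + ((N + i : ℕ):ℝ)) + 1 = 1 + ((N + (i + 1) : ℕ):ℝ) := by push_cast; ring
          rw [e1] at this
          exact this
        calc ∑ i ∈ Finset.range k, (1 + ((N + (i + 1) : ℕ):ℝ)) ^ (-p)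
            ≤ ∑ i ∈ Finset.range k,
              (((1 + ((N + i : ℕ):ℝ)) ^ (1 - p) - (1 + ((N + (i + 1) : ℕ):ℝ)) ^ (1 - p)) / (p - 1)) :=
              Finset.sum_le_sum fun i _ => step i
          _ = ((1 + ((N + 0 : ℕ):ℝ)) ^ (1 - p) - (1 + ((N + k : ℕ):ℝ)) ^ (1 - p)) / (p - 1) := by
              rw [← Finset.sum_div]
              congr 1
              exact Finset.sum_range_sub' (fun i : ℕ => (1 + ((N + i : ℕ):ℝ)) ^ (1 - p)) k
          _ ≤ (1 + (N:ℝ)) ^ (1 - p) / (p - 1) := by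
              apply div_le_div_of_nonneg_right (c := p - 1) ?_ hq.le
              have : (0:ℝ) ≤ (1 + ((N + k : ℕ):ℝ)) ^ (1 - p) := by positivity
              have e : ((N + 0 : ℕ):ℝ) = (N:ℝ) := by push_cast; ring
              rw [e]
              linarith
      have e0 : (1 + ((N + 0 : ℕ):ℝ)) ^ (-p) = (1 + (N:ℝ)) ^ (-p) := by norm_num
      rw [e0]
      linarith [tele]
  calc ∑ m ∈ s, (1 + (m:ℝ)) ^ (-p) ≤ _ := h1
    _ ≤ (1 + (N:ℝ)) ^ (-p) + (1 + (N:ℝ)) ^ (1 - p) / (p - 1) := h2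
    _ ≤ (1 + 1 / (p - 1)) * (1 + (N:ℝ)) ^ (1 - p) := by
        rw [add_mul, one_mul, one_div, inv_mul_eq_div]
        exact add_le_add_left hbase _

lemma inv_quarter {X Y s : ℝ} (hX : 0 < X) (hY : 0 < Y) (h : X ≤ 4 * Y) (hs : 0 ≤ s) :
    Y ^ (-(s/2)) ≤ 2 ^ s * X ^ (-(s/2)) := by
  have h4 : (0:ℝ) < X / 4 := by linarith
  have h1 : Y ^ (-(s/2)) ≤ (X / 4) ^ (-(s/2)) :=
    Real.rpow_le_rpow_of_nonpos h4 (by linarith) (by linarith)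
  have h2 : (X / 4) ^ (-(s/2)) = 2 ^ s * X ^ (-(s/2)) := by
    have h24 : (2:ℝ) ^ (2:ℝ) = 4 := by
      have := Real.rpow_natCast (2:ℝ) 2
      norm_num at this
      linarith
    have h4s : (4:ℝ) ^ (s/2) = 2 ^ s := by
      rw [← h24, ← Real.rpow_mul (by norm_num : (0:ℝ) ≤ 2)]
      congr 1
      ring
    rw [Real.div_rpow hX.le (by norm_num : (0:ℝ) ≤ 4),
      Real.rpow_neg (by norm_num : (0:ℝ) ≤ 4), div_eq_mul_inv, inv_inv, h4s, mul_comm]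
  rw [← h2]; exact h1

lemma br_poly_le {s : ℝ} (hs : 0 ≤ s) (x : ℝ) (hx : 0 ≤ x) :
    (1 + x ^ 2) ^ (-(s/2)) ≤ 2 ^ (s/2) * (1 + x) ^ (-s) := by
  have h1 : (0:ℝ) < 1 + x^2 := by positivity
  have h2 : (0:ℝ) < 1 + x := by linarith
  have key : (1 + x)^2 ≤ 2 * (1 + x^2) := by nlinarith [sq_nonneg (x - 1)]
  have e1 : (1 + x) ^ (-s) = ((1 + x) ^ 2) ^ (-(s/2)) := by
    rw [← Real.rpow_natCast (1+x) 2, ← Real.rpow_mul h2.le]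
    congr 1
    ring
  rw [e1]
  have h3 : ((1 + x)^2) ^ (-(s/2)) ≥ (2 * (1 + x^2)) ^ (-(s/2)) :=
    Real.rpow_le_rpow_of_nonpos (by positivity) key (by linarith)
  have e2 : (2 * (1 + x^2)) ^ (-(s/2)) = 2 ^ (-(s/2)) * (1 + x^2) ^ (-(s/2)) := by
    rw [Real.mul_rpow (by norm_num) h1.le]
  calc (1 + x^2) ^ (-(s/2)) = 2 ^ (s/2) * (2 ^ (-(s/2)) * (1 + x^2) ^ (-(s/2))) := by
        rw [← mul_assoc, ← Real.rpow_add (by norm_num : (0:ℝ) < 2)]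
        norm_num
    _ ≤ 2 ^ (s/2) * ((1 + x)^2) ^ (-(s/2)) := by
        apply mul_le_mul_of_nonneg_left (e2 ▸ h3) (by positivity)

lemma poly_br_le_of_nonpos {u : ℝ} (hu : u ≤ 0) (x : ℝ) (hx : 0 ≤ x) :
    (1 + x) ^ u ≤ (1 + x ^ 2) ^ (u/2) := by
  have h1 : (0:ℝ) < 1 + x^2 := by positivity
  have h2 : (0:ℝ) < 1 + x := by linarith
  have key : 1 + x^2 ≤ (1 + x)^2 := by nlinarith
  have e1 : (1 + x) ^ u = ((1 + x) ^ 2) ^ (u/2) := by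
    rw [← Real.rpow_natCast (1+x) 2, ← Real.rpow_mul h2.le]
    congr 1
    ring
  rw [e1]
  exact Real.rpow_le_rpow_of_nonpos h1 key (by linarith)

lemma poly_br_le_of_nonneg {u : ℝ} (hu : 0 ≤ u) (x : ℝ) (hx : 0 ≤ x) :
    (1 + x) ^ u ≤ 2 ^ (u/2) * (1 + x ^ 2) ^ (u/2) := by
  have h1 : (0:ℝ) < 1 + x^2 := by positivity
  have h2 : (0:ℝ) < 1 + x := by linarith
  have key : (1 + x)^2 ≤ 2 * (1 + x^2) := by nlinarith [sq_nonneg (x - 1)]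
  have e1 : (1 + x) ^ u = ((1 + x) ^ 2) ^ (u/2) := by
    rw [← Real.rpow_natCast (1+x) 2, ← Real.rpow_mul h2.le]
    congr 1
    ring
  rw [e1, ← Real.mul_rpow (by norm_num) h1.le]
  exact Real.rpow_le_rpow (by positivity) key (by linarith)

lemma center_sum {D : ℝ} (hD0 : 0 ≤ D) (hD1 : D < 1) (n : ℕ) :
    ∑ m ∈ Finset.range (2*n+1), (1 + ((n:ℝ) - (m:ℝ)) ^ 2) ^ (-(D/2))
      ≤ 2 * (2 ^ (D/2) * ((1 + (n:ℝ)) ^ (1-D) / (1-D))) := by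
  have h1D : (0:ℝ) < 1 - D := by linarith
  set gk : ℕ → ℝ := fun k => (1 + (k:ℝ) ^ 2) ^ (-(D/2)) with hgk
  have hgk0 : ∀ k, 0 ≤ gk k := fun k => by positivity
  have base : ∑ k ∈ Finset.range (n+1), gk k ≤ 2 ^ (D/2) * ((1 + (n:ℝ)) ^ (1-D) / (1-D)) := by
    calc ∑ k ∈ Finset.range (n+1), gk k
        ≤ ∑ k ∈ Finset.range (n+1), 2 ^ (D/2) * (1 + (k:ℝ)) ^ (-D) :=
          Finset.sum_le_sum fun k _ => br_poly_le hD0 (k:ℝ) (Nat.cast_nonneg k)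
      _ = 2 ^ (D/2) * ∑ k ∈ Finset.range (n+1), (1 + (k:ℝ)) ^ (-D) := by
          rw [Finset.mul_sum]
      _ ≤ 2 ^ (D/2) * ((1 + (n:ℝ)) ^ (1-D) / (1-D)) := by
          apply mul_le_mul_of_nonneg_left (head_sum hD0 hD1 n) (by positivity)
  have hsplit : ∑ m ∈ Finset.range (2*n+1), (1 + ((n:ℝ) - (m:ℝ)) ^ 2) ^ (-(D/2))
      = ∑ m ∈ Finset.range (n+1), (1 + ((n:ℝ) - (m:ℝ)) ^ 2) ^ (-(D/2))
        + ∑ m ∈ Finset.Ico (n+1) (2*n+1), (1 + ((n:ℝ) - (m:ℝ)) ^ 2) ^ (-(D/2)) := by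
    rw [Finset.range_eq_Ico, Finset.range_eq_Ico]
    exact (Finset.sum_Ico_consecutive (fun m : ℕ => (1 + ((n:ℝ) - (m:ℝ)) ^ 2) ^ (-(D/2))) (Nat.zero_le (n+1)) (by omega : n+1 ≤ 2*n+1)).symm
  have hfirst : ∑ m ∈ Finset.range (n+1), (1 + ((n:ℝ) - (m:ℝ)) ^ 2) ^ (-(D/2))
      = ∑ k ∈ Finset.range (n+1), gk k := by
    have := Finset.sum_range_reflect gk (n+1)
    rw [← this]
    apply Finset.sum_congr rfl
    intro m hm
    have hmn : m ≤ n := by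
      have := Finset.mem_range.1 hm; omega
    have : ((n - m : ℕ) : ℝ) = (n:ℝ) - (m:ℝ) := by
      rw [Nat.cast_sub hmn]
    simp only [hgk, Nat.add_sub_cancel]
    rw [this]
  have hsecond : ∑ m ∈ Finset.Ico (n+1) (2*n+1), (1 + ((n:ℝ) - (m:ℝ)) ^ 2) ^ (-(D/2))
      ≤ ∑ k ∈ Finset.range (n+1), gk k := by
    rw [Finset.sum_Ico_eq_sum_range]
    have heq : ∀ i ∈ Finset.range (2*n+1-(n+1)),
        (1 + ((n:ℝ) - ((n+1+i : ℕ):ℝ)) ^ 2) ^ (-(D/2)) = gk (i+1) := by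
      intro i _
      simp only [hgk]
      congr 2
      push_cast
      ring
    rw [Finset.sum_congr rfl heq]
    have h2n : 2*n+1-(n+1) = n := by omega
    rw [h2n]
    have := Finset.sum_range_succ' gk n
    rw [this]
    have : 0 ≤ gk 0 := hgk0 0
    linarith
  rw [hsplit, hfirst]
  have := hsecond
  linarith


lemma key_row {D t e : ℝ} (hD0 : 0 ≤ D) (hD1 : D < 1) (ht : 1 < t)
    (he1 : -D ≤ e) (he2 : 1 - D - t ≤ e) :
    ∃ C : ℝ, 0 < C ∧ ∀ (n : ℕ) (s : Finset ℕ),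
      ∑ m ∈ s, (1 + ((n:ℝ) - (m:ℝ)) ^ 2) ^ (-(D/2)) * (1 + (m:ℝ) ^ 2) ^ (-(t/2))
        ≤ C * (1 + (n:ℝ) ^ 2) ^ (e/2) := by
  have ht0 : (0:ℝ) < t := by linarith
  have hDt : 1 < D + t := by linarith
  have h1t : (0:ℝ) < t - 1 := by linarith
  have h1D : (0:ℝ) < 1 - D := by linarith
  have h1Dt : (0:ℝ) < D + t - 1 := by linarith
  have haux1 : (0:ℝ) < 1 + 1/(t-1) := by have := one_div_pos.mpr h1t; linarith
  have haux3 : (0:ℝ) < 1 + 1/(D+t-1) := by have := one_div_pos.mpr h1Dt; linarith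
  have hc1 : (0:ℝ) < 2 ^ D * 2 ^ (t/2) * (1 + 1/(t-1)) :=
    mul_pos (mul_pos (Real.rpow_pos_of_pos two_pos D) (Real.rpow_pos_of_pos two_pos _)) haux1
  have hc2 : (0:ℝ) < 2 ^ t * 2 * 2 ^ (D/2) * (2 ^ ((1-D)/2) / (1-D)) :=
    mul_pos (mul_pos (mul_pos (Real.rpow_pos_of_pos two_pos t) two_pos)
      (Real.rpow_pos_of_pos two_pos _)) (div_pos (Real.rpow_pos_of_pos two_pos _) h1D)
  have hc3 : (0:ℝ) < 2 ^ D * 2 ^ ((D+t)/2) * (1 + 1/(D+t-1)) :=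
    mul_pos (mul_pos (Real.rpow_pos_of_pos two_pos D) (Real.rpow_pos_of_pos two_pos _)) haux3
  refine ⟨2 ^ D * 2 ^ (t/2) * (1 + 1/(t-1))
      + 2 ^ t * 2 * 2 ^ (D/2) * (2 ^ ((1-D)/2) / (1-D))
      + 2 ^ D * 2 ^ ((D+t)/2) * (1 + 1/(D+t-1)), by linarith, ?_⟩
  intro n s
  set X := (1 + (n:ℝ)^2) with hXdef
  have hX0 : (0:ℝ) < X := by positivity
  have hX1 : (1:ℝ) ≤ X := by nlinarith [sq_nonneg ((n:ℝ))]
  have hXe : ∀ u : ℝ, u ≤ e → X ^ (u/2) ≤ X ^ (e/2) :=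
    fun u hu => Real.rpow_le_rpow_of_exponent_le hX1 (by linarith)
  set g : ℕ → ℝ := fun m => (1 + ((n:ℝ) - (m:ℝ)) ^ 2) ^ (-(D/2)) * (1 + (m:ℝ) ^ 2) ^ (-(t/2))
    with hgdef
  have hg0 : ∀ m, 0 ≤ g m := fun m => by positivity
  -- split
  have hsplit : ∑ m ∈ s, g m
      = ∑ m ∈ s.filter (fun m => 2*m ≤ n), g m
        + ∑ m ∈ (s.filter (fun m => ¬ 2*m ≤ n)).filter (fun m => m ≤ 2*n), g m
        + ∑ m ∈ (s.filter (fun m => ¬ 2*m ≤ n)).filter (fun m => ¬ m ≤ 2*n), g m := by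
    rw [add_assoc, Finset.sum_filter_add_sum_filter_not, Finset.sum_filter_add_sum_filter_not]
  rw [hsplit]
  -- Region 1 : 2m ≤ n
  have hb1 : ∑ m ∈ s.filter (fun m => 2*m ≤ n), g m
      ≤ 2 ^ D * 2 ^ (t/2) * (1 + 1/(t-1)) * X ^ (e/2) := by
    have hterm : ∀ m ∈ s.filter (fun m => 2*m ≤ n),
        g m ≤ 2 ^ D * X ^ (-(D/2)) * (2 ^ (t/2) * (1 + (m:ℝ)) ^ (-t)) := by
      intro m hm
      have hmn : 2*m ≤ n := (Finset.mem_filter.1 hm).2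
      have hmn' : 2*(m:ℝ) ≤ (n:ℝ) := by exact_mod_cast hmn
      have h1 : (1 + ((n:ℝ) - (m:ℝ)) ^ 2) ^ (-(D/2)) ≤ 2 ^ D * X ^ (-(D/2)) := by
        apply inv_quarter hX0 (by positivity) ?_ hD0
        nlinarith [sq_nonneg ((n:ℝ) - 2*(m:ℝ))]
      have h2 : (1 + (m:ℝ) ^ 2) ^ (-(t/2)) ≤ 2 ^ (t/2) * (1 + (m:ℝ)) ^ (-t) :=
        br_poly_le ht0.le (m:ℝ) (Nat.cast_nonneg m)
      exact mul_le_mul h1 h2 (by positivity) (by positivity)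
    calc ∑ m ∈ s.filter (fun m => 2*m ≤ n), g m
        ≤ ∑ m ∈ s.filter (fun m => 2*m ≤ n), 2 ^ D * X ^ (-(D/2)) * (2 ^ (t/2) * (1 + (m:ℝ)) ^ (-t)) :=
          Finset.sum_le_sum hterm
      _ = 2 ^ D * X ^ (-(D/2)) * 2 ^ (t/2) * ∑ m ∈ s.filter (fun m => 2*m ≤ n), (1 + (m:ℝ)) ^ (-t) := by
          rw [Finset.mul_sum]
          apply Finset.sum_congr rfl
          intro m _
          ring
      _ ≤ 2 ^ D * X ^ (-(D/2)) * 2 ^ (t/2) * ((1 + 1/(t-1)) * (1 + ((0:ℕ):ℝ)) ^ (1-t)) := by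
          apply mul_le_mul_of_nonneg_left (tail_sum ht 0 _ (fun m _ => Nat.zero_le m))
          have h2D : (0:ℝ) < (2:ℝ) ^ D := Real.rpow_pos_of_pos two_pos D
          have hXD : (0:ℝ) < X ^ (-(D/2)) := Real.rpow_pos_of_pos hX0 _
          have h2t : (0:ℝ) < (2:ℝ) ^ (t/2) := Real.rpow_pos_of_pos two_pos _
          positivity
      _ ≤ 2 ^ D * 2 ^ (t/2) * (1 + 1/(t-1)) * X ^ (e/2) := by
          rw [Nat.cast_zero, show ((1:ℝ) + 0) ^ (1-t) = 1 by norm_num [Real.one_rpow]]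
          have := hXe (-D) he1
          have hXeD : X ^ (-(D/2)) ≤ X ^ (e/2) := by
            rw [show -(D/2) = (-D)/2 by ring] at *
            exact this
          calc 2 ^ D * X ^ (-(D/2)) * 2 ^ (t/2) * ((1 + 1/(t-1)) * 1)
              = (2 ^ D * 2 ^ (t/2) * (1 + 1/(t-1))) * X ^ (-(D/2)) := by ring
            _ ≤ (2 ^ D * 2 ^ (t/2) * (1 + 1/(t-1))) * X ^ (e/2) := by
                apply mul_le_mul_of_nonneg_left hXeD hc1.le
  -- Region 2 : n < 2m and m ≤ 2n
  have hb2 : ∑ m ∈ (s.filter (fun m => ¬ 2*m ≤ n)).filter (fun m => m ≤ 2*n), g m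
      ≤ 2 ^ t * 2 * 2 ^ (D/2) * (2 ^ ((1-D)/2) / (1-D)) * X ^ (e/2) := by
    have hterm : ∀ m ∈ (s.filter (fun m => ¬ 2*m ≤ n)).filter (fun m => m ≤ 2*n),
        g m ≤ (1 + ((n:ℝ) - (m:ℝ)) ^ 2) ^ (-(D/2)) * (2 ^ t * X ^ (-(t/2))) := by
      intro m hm
      have h1 := Finset.mem_filter.1 hm
      have hnm : ¬ 2*m ≤ n := (Finset.mem_filter.1 h1.1).2
      have hnm' : (n:ℝ) ≤ 2*(m:ℝ) := by
        have : n ≤ 2*m := by omega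
        exact_mod_cast this
      have h2 : (1 + (m:ℝ) ^ 2) ^ (-(t/2)) ≤ 2 ^ t * X ^ (-(t/2)) := by
        apply inv_quarter hX0 (by positivity) ?_ ht0.le
        nlinarith [sq_nonneg (2*(m:ℝ) - (n:ℝ)), sq_nonneg ((n:ℝ))]
      exact mul_le_mul_of_nonneg_left h2 (by positivity)
    calc ∑ m ∈ (s.filter (fun m => ¬ 2*m ≤ n)).filter (fun m => m ≤ 2*n), g m
        ≤ ∑ m ∈ (s.filter (fun m => ¬ 2*m ≤ n)).filter (fun m => m ≤ 2*n),
            (1 + ((n:ℝ) - (m:ℝ)) ^ 2) ^ (-(D/2)) * (2 ^ t * X ^ (-(t/2))) :=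
          Finset.sum_le_sum hterm
      _ = (2 ^ t * X ^ (-(t/2))) * ∑ m ∈ (s.filter (fun m => ¬ 2*m ≤ n)).filter (fun m => m ≤ 2*n),
            (1 + ((n:ℝ) - (m:ℝ)) ^ 2) ^ (-(D/2)) := by
          rw [Finset.mul_sum]
          apply Finset.sum_congr rfl
          intro m _
          ring
      _ ≤ (2 ^ t * X ^ (-(t/2))) * ∑ m ∈ Finset.range (2*n+1),
            (1 + ((n:ℝ) - (m:ℝ)) ^ 2) ^ (-(D/2)) := by
          apply mul_le_mul_of_nonneg_left ?_ (by positivity)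
          apply Finset.sum_le_sum_of_subset_of_nonneg
          · intro m hm
            have h1 := Finset.mem_filter.1 hm
            have h2 : m ≤ 2*n := h1.2
            exact Finset.mem_range.2 (by omega)
          · intro m _ _
            positivity
      _ ≤ (2 ^ t * X ^ (-(t/2))) * (2 * (2 ^ (D/2) * ((1 + (n:ℝ)) ^ (1-D) / (1-D)))) := by
          apply mul_le_mul_of_nonneg_left (center_sum hD0 hD1 n) (by positivity)
      _ ≤ 2 ^ t * 2 * 2 ^ (D/2) * (2 ^ ((1-D)/2) / (1-D)) * X ^ (e/2) := by
          have hpoly : (1 + (n:ℝ)) ^ (1-D) ≤ 2 ^ ((1-D)/2) * X ^ ((1-D)/2) :=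
            poly_br_le_of_nonneg h1D.le (n:ℝ) (Nat.cast_nonneg n)
          have hXX : X ^ (-(t/2)) * X ^ ((1-D)/2) = X ^ ((1-D-t)/2) := by
            rw [← Real.rpow_add hX0]
            congr 1
            ring
          have hXee : X ^ ((1-D-t)/2) ≤ X ^ (e/2) := hXe _ he2
          have hXp : (0:ℝ) < X ^ (-(t/2)) := Real.rpow_pos_of_pos hX0 _
          have h2t : (0:ℝ) < (2:ℝ) ^ t := Real.rpow_pos_of_pos two_pos t
          have h2D : (0:ℝ) < (2:ℝ) ^ (D/2) := Real.rpow_pos_of_pos two_pos _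
          have h2D' : (0:ℝ) < (2:ℝ) ^ ((1-D)/2) := Real.rpow_pos_of_pos two_pos _
          calc (2 ^ t * X ^ (-(t/2))) * (2 * (2 ^ (D/2) * ((1 + (n:ℝ)) ^ (1-D) / (1-D))))
              ≤ (2 ^ t * X ^ (-(t/2))) * (2 * (2 ^ (D/2) * ((2 ^ ((1-D)/2) * X ^ ((1-D)/2)) / (1-D)))) := by
                apply mul_le_mul_of_nonneg_left ?_ (by positivity)
                apply mul_le_mul_of_nonneg_left ?_ (by norm_num)
                apply mul_le_mul_of_nonneg_left ?_ h2D.le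
                exact div_le_div_of_nonneg_right (c := 1-D) hpoly h1D.le
            _ = 2 ^ t * 2 * 2 ^ (D/2) * (2 ^ ((1-D)/2) / (1-D)) * (X ^ (-(t/2)) * X ^ ((1-D)/2)) := by
                ring
            _ = 2 ^ t * 2 * 2 ^ (D/2) * (2 ^ ((1-D)/2) / (1-D)) * X ^ ((1-D-t)/2) := by
                rw [hXX]
            _ ≤ 2 ^ t * 2 * 2 ^ (D/2) * (2 ^ ((1-D)/2) / (1-D)) * X ^ (e/2) := by
                apply mul_le_mul_of_nonneg_left hXee hc2.le
  -- Region 3 : 2n < m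
  have hb3 : ∑ m ∈ (s.filter (fun m => ¬ 2*m ≤ n)).filter (fun m => ¬ m ≤ 2*n), g m
      ≤ 2 ^ D * 2 ^ ((D+t)/2) * (1 + 1/(D+t-1)) * X ^ (e/2) := by
    have hterm : ∀ m ∈ (s.filter (fun m => ¬ 2*m ≤ n)).filter (fun m => ¬ m ≤ 2*n),
        g m ≤ 2 ^ D * 2 ^ ((D+t)/2) * (1 + (m:ℝ)) ^ (-(D+t)) := by
      intro m hm
      have h1 := Finset.mem_filter.1 hm
      have hnm : ¬ m ≤ 2*n := h1.2
      have hnm' : 2*(n:ℝ) ≤ (m:ℝ) := by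
        have : 2*n ≤ m := by omega
        exact_mod_cast this
      have hfac1 : (1 + ((n:ℝ) - (m:ℝ)) ^ 2) ^ (-(D/2)) ≤ 2 ^ D * (1 + (m:ℝ)^2) ^ (-(D/2)) := by
        apply inv_quarter (by positivity) (by positivity) ?_ hD0
        nlinarith [sq_nonneg ((m:ℝ) - 2*(n:ℝ)), sq_nonneg ((n:ℝ))]
      have hprod : g m ≤ 2 ^ D * ((1 + (m:ℝ)^2) ^ (-(D/2)) * (1 + (m:ℝ)^2) ^ (-(t/2))) := by
        have := mul_le_mul_of_nonneg_right hfac1 (by positivity : (0:ℝ) ≤ (1 + (m:ℝ)^2) ^ (-(t/2)))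
        calc g m = (1 + ((n:ℝ) - (m:ℝ)) ^ 2) ^ (-(D/2)) * (1 + (m:ℝ) ^ 2) ^ (-(t/2)) := rfl
          _ ≤ 2 ^ D * (1 + (m:ℝ)^2) ^ (-(D/2)) * (1 + (m:ℝ)^2) ^ (-(t/2)) := this
          _ = 2 ^ D * ((1 + (m:ℝ)^2) ^ (-(D/2)) * (1 + (m:ℝ)^2) ^ (-(t/2))) := by ring
      have hcomb : (1 + (m:ℝ)^2) ^ (-(D/2)) * (1 + (m:ℝ)^2) ^ (-(t/2))
          = (1 + (m:ℝ)^2) ^ (-((D+t)/2)) := by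
        rw [← Real.rpow_add (by positivity)]
        congr 1
        ring
      have hbr : (1 + (m:ℝ)^2) ^ (-((D+t)/2)) ≤ 2 ^ ((D+t)/2) * (1 + (m:ℝ)) ^ (-(D+t)) :=
        br_poly_le (by linarith) (m:ℝ) (Nat.cast_nonneg m)
      calc g m ≤ 2 ^ D * ((1 + (m:ℝ)^2) ^ (-((D+t)/2))) := by rw [← hcomb]; exact hprod
        _ ≤ 2 ^ D * (2 ^ ((D+t)/2) * (1 + (m:ℝ)) ^ (-(D+t))) := by
            apply mul_le_mul_of_nonneg_left hbr (by positivity)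
        _ = 2 ^ D * 2 ^ ((D+t)/2) * (1 + (m:ℝ)) ^ (-(D+t)) := by ring
    calc ∑ m ∈ (s.filter (fun m => ¬ 2*m ≤ n)).filter (fun m => ¬ m ≤ 2*n), g m
        ≤ ∑ m ∈ (s.filter (fun m => ¬ 2*m ≤ n)).filter (fun m => ¬ m ≤ 2*n),
            2 ^ D * 2 ^ ((D+t)/2) * (1 + (m:ℝ)) ^ (-(D+t)) :=
          Finset.sum_le_sum hterm
      _ = 2 ^ D * 2 ^ ((D+t)/2) * ∑ m ∈ (s.filter (fun m => ¬ 2*m ≤ n)).filter (fun m => ¬ m ≤ 2*n),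
            (1 + (m:ℝ)) ^ (-(D+t)) := by
          rw [Finset.mul_sum]
      _ ≤ 2 ^ D * 2 ^ ((D+t)/2) * ((1 + 1/(D+t-1)) * (1 + (n:ℝ)) ^ (1-(D+t))) := by
          apply mul_le_mul_of_nonneg_left ?_ ?_
          · apply tail_sum hDt n
            intro m hm
            have h1 := Finset.mem_filter.1 hm
            have : ¬ m ≤ 2*n := h1.2
            omega
          · have h2D : (0:ℝ) < (2:ℝ) ^ D := Real.rpow_pos_of_pos two_pos D
            have h2Dt : (0:ℝ) < (2:ℝ) ^ ((D+t)/2) := Real.rpow_pos_of_pos two_pos _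
            positivity
      _ ≤ 2 ^ D * 2 ^ ((D+t)/2) * (1 + 1/(D+t-1)) * X ^ (e/2) := by
          have hpoly : (1 + (n:ℝ)) ^ (1-(D+t)) ≤ X ^ ((1-(D+t))/2) :=
            poly_br_le_of_nonpos (by linarith) (n:ℝ) (Nat.cast_nonneg n)
          have hXee : X ^ ((1-(D+t))/2) ≤ X ^ (e/2) := by
            apply hXe
            linarith
          have h2D : (0:ℝ) < (2:ℝ) ^ D := Real.rpow_pos_of_pos two_pos D
          have h2Dt : (0:ℝ) < (2:ℝ) ^ ((D+t)/2) := Real.rpow_pos_of_pos two_pos _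
          calc 2 ^ D * 2 ^ ((D+t)/2) * ((1 + 1/(D+t-1)) * (1 + (n:ℝ)) ^ (1-(D+t)))
              ≤ 2 ^ D * 2 ^ ((D+t)/2) * ((1 + 1/(D+t-1)) * X ^ (e/2)) := by
                apply mul_le_mul_of_nonneg_left ?_ (by positivity)
                apply mul_le_mul_of_nonneg_left (hpoly.trans hXee) haux3.le
            _ = 2 ^ D * 2 ^ ((D+t)/2) * (1 + 1/(D+t-1)) * X ^ (e/2) := by ring
  have hXep : (0:ℝ) ≤ X ^ (e/2) := (Real.rpow_pos_of_pos hX0 _).le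
  calc _ ≤ 2 ^ D * 2 ^ (t/2) * (1 + 1/(t-1)) * X ^ (e/2)
        + 2 ^ t * 2 * 2 ^ (D/2) * (2 ^ ((1-D)/2) / (1-D)) * X ^ (e/2)
        + 2 ^ D * 2 ^ ((D+t)/2) * (1 + 1/(D+t-1)) * X ^ (e/2) := by
        exact add_le_add (add_le_add hb1 hb2) hb3
    _ = (2 ^ D * 2 ^ (t/2) * (1 + 1/(t-1))
        + 2 ^ t * 2 * 2 ^ (D/2) * (2 ^ ((1-D)/2) / (1-D))
        + 2 ^ D * 2 ^ ((D+t)/2) * (1 + 1/(D+t-1))) * X ^ (e/2) := by ring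

open scoped ENNReal

theorem stmt_2 (δ η : ℝ) (hδ0 : 0 ≤ δ) (hδ1 : δ ≤ 1) (hη : (1 - δ) / 2 < η) :
    ∃ C : ℝ, 0 < C ∧
      ∀ a b : ℕ → ℝ, (∀ n, 0 ≤ a n) → (∀ m, 0 ≤ b m) →
        (∑' n : ℕ, ∑' m : ℕ,
            ENNReal.ofReal (a n * b m / Real.sqrt (1 + ((n : ℝ) - (m : ℝ)) ^ 2) ^ δ))
          ≤ ENNReal.ofReal C *
            (∑' n : ℕ, ENNReal.ofReal ((1 + (n : ℝ) ^ 2) ^ η * a n ^ 2)) ^ ((1 : ℝ) / 2) *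
            (∑' m : ℕ, ENNReal.ofReal ((1 + (m : ℝ) ^ 2) ^ η * b m ^ 2)) ^ ((1 : ℝ) / 2) := by
  have hη0 : 0 < η := lt_of_le_of_lt (by linarith : (0:ℝ) ≤ (1-δ)/2) hη
  have hmin1 : 0 < min η 1 := lt_min hη0 one_pos
  have hmin2 : min η 1 ≤ 1 := min_le_right _ _
  have hmin3 : min η 1 ≤ η := min_le_left _ _
  set D := min δ (1 - min η 1 / 2) with hDdef
  have hD0 : 0 ≤ D := le_min hδ0 (by linarith)
  have hDδ : D ≤ δ := min_le_left _ _
  have hD1 : D < 1 := lt_of_le_of_lt (min_le_right _ _) (by linarith)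
  have h2ηD : 1 < 2*η + D := by
    rcases le_total δ (1 - min η 1 / 2) with h | h
    · rw [hDdef, min_eq_left h]; linarith
    · rw [hDdef, min_eq_right h]; linarith
  set t := (1 + 2*η + D)/2 with htdef
  set e := 2*η - t with hedef
  have ht : 1 < t := by rw [htdef]; linarith
  have he1 : -D ≤ e := by rw [hedef, htdef]; linarith
  have he2 : 1 - D - t ≤ e := by rw [hedef]; linarith
  obtain ⟨C₀, hC₀, hrow⟩ := key_row hD0 hD1 ht he1 he2
  refine ⟨C₀, hC₀, ?_⟩
  intro a b ha hb
  -- abbreviations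
  set u : ℕ → ℝ := fun n => 1 + (n:ℝ)^2 with hudef
  have hu0 : ∀ n, 0 < u n := fun n => by positivity
  have hu1 : ∀ n, 1 ≤ u n := fun n => by
    simp only [hudef]; nlinarith [sq_nonneg ((n:ℝ))]
  set Y : ℕ → ℕ → ℝ := fun n m => 1 + ((n:ℝ) - (m:ℝ))^2 with hYdef
  have hY0 : ∀ n m, 0 < Y n m := fun n m => by positivity
  have hY1 : ∀ n m, 1 ≤ Y n m := fun n m => by
    simp only [hYdef]; nlinarith [sq_nonneg ((n:ℝ) - (m:ℝ))]
  set Fr : ℕ → ℕ → ℝ := fun n m =>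
    a n * u n ^ (η/2) * Y n m ^ (-(D/4)) * u m ^ (-(t/4)) * u n ^ ((t - 2*η)/4) with hFrdef
  set Gr : ℕ → ℕ → ℝ := fun n m =>
    b m * u m ^ (η/2) * Y n m ^ (-(D/4)) * u n ^ (-(t/4)) * u m ^ ((t - 2*η)/4) with hGrdef
  have hFr0 : ∀ n m, 0 ≤ Fr n m := fun n m => by
    have := ha n; have := (hu0 n); have := hY0 n m; have := hu0 m; positivity
  have hGr0 : ∀ n m, 0 ≤ Gr n m := fun n m => by
    have := hb m; have := (hu0 n); have := hY0 n m; have := hu0 m; positivity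
  set F : ℕ × ℕ → ℝ≥0∞ := fun p => ENNReal.ofReal (Fr p.1 p.2) with hFdef
  set G : ℕ × ℕ → ℝ≥0∞ := fun p => ENNReal.ofReal (Gr p.1 p.2) with hGdef
  -- pointwise bound
  have pointwise : ∀ n m : ℕ,
      ENNReal.ofReal (a n * b m / Real.sqrt (1 + ((n:ℝ) - (m:ℝ)) ^ 2) ^ δ)
        ≤ F (n, m) * G (n, m) := by
    intro n m
    rw [hFdef, hGdef, ← ENNReal.ofReal_mul (hFr0 n m)]
    apply ENNReal.ofReal_le_ofReal
    have hprod : Fr n m * Gr n m = a n * b m * Y n m ^ (-(D/2)) := by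
      have eY : Y n m ^ (-(D/4)) * Y n m ^ (-(D/4)) = Y n m ^ (-(D/2)) := by
        rw [← Real.rpow_add (hY0 n m)]; congr 1; ring
      have eUn : u n ^ (η/2) * (u n ^ (-(t/4)) * u n ^ ((t - 2*η)/4)) = 1 := by
        rw [← Real.rpow_add (hu0 n), ← Real.rpow_add (hu0 n)]
        rw [show η/2 + (-(t/4) + (t - 2*η)/4) = 0 by ring, Real.rpow_zero]
      have eUm : u m ^ (η/2) * (u m ^ (-(t/4)) * u m ^ ((t - 2*η)/4)) = 1 := by
        rw [← Real.rpow_add (hu0 m), ← Real.rpow_add (hu0 m)]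
        rw [show η/2 + (-(t/4) + (t - 2*η)/4) = 0 by ring, Real.rpow_zero]
      calc Fr n m * Gr n m
          = (a n * b m) * (Y n m ^ (-(D/4)) * Y n m ^ (-(D/4)))
            * (u n ^ (η/2) * (u n ^ (-(t/4)) * u n ^ ((t - 2*η)/4)))
            * (u m ^ (η/2) * (u m ^ (-(t/4)) * u m ^ ((t - 2*η)/4))) := by
            rw [hFrdef, hGrdef]; ring
        _ = a n * b m * Y n m ^ (-(D/2)) := by rw [eY, eUn, eUm]; ring
    rw [hprod]
    have hsqrt : Real.sqrt (1 + ((n:ℝ) - (m:ℝ)) ^ 2) ^ δ = Y n m ^ (δ/2) := by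
      rw [Real.sqrt_eq_rpow, ← Real.rpow_mul (by positivity)]
      rw [hYdef]
      congr 1
      ring
    rw [hsqrt, div_eq_mul_inv, ← Real.rpow_neg (hY0 n m).le]
    apply mul_le_mul_of_nonneg_left ?_ (by have := ha n; have := hb m; positivity)
    exact Real.rpow_le_rpow_of_exponent_le (hY1 n m) (by linarith)
  -- row bounds, tsum versions
  have rowF : ∀ n : ℕ, (∑' m : ℕ, ENNReal.ofReal (Y n m ^ (-(D/2)) * u m ^ (-(t/2))))
      ≤ ENNReal.ofReal (C₀ * u n ^ (e/2)) := by
    intro n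
    apply Summable.tsum_le_of_sum_le ENNReal.summable
    intro s
    rw [← ENNReal.ofReal_sum_of_nonneg (fun m _ =>
      mul_nonneg (Real.rpow_nonneg (hY0 n m).le _) (Real.rpow_nonneg (hu0 m).le _))]
    exact ENNReal.ofReal_le_ofReal (hrow n s)
  have rowG : ∀ m : ℕ, (∑' n : ℕ, ENNReal.ofReal (Y n m ^ (-(D/2)) * u n ^ (-(t/2))))
      ≤ ENNReal.ofReal (C₀ * u m ^ (e/2)) := by
    intro m
    apply Summable.tsum_le_of_sum_le ENNReal.summable
    intro s
    rw [← ENNReal.ofReal_sum_of_nonneg (fun k _ =>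
      mul_nonneg (Real.rpow_nonneg (hY0 k m).le _) (Real.rpow_nonneg (hu0 k).le _))]
    apply ENNReal.ofReal_le_ofReal
    have : ∀ k ∈ s, Y k m ^ (-(D/2)) * u k ^ (-(t/2))
        = (1 + ((m:ℝ) - (k:ℝ))^2) ^ (-(D/2)) * (1 + (k:ℝ)^2) ^ (-(t/2)) := by
      intro k _
      congr 2
      simp only [hYdef]
      ring
    rw [Finset.sum_congr rfl this]
    exact hrow m s
  -- squares
  have hF2 : ∀ n m : ℕ, F (n, m) ^ (2:ℝ)
      = ENNReal.ofReal ((u n ^ η * a n ^ 2 * u n ^ ((t - 2*η)/2))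
          * (Y n m ^ (-(D/2)) * u m ^ (-(t/2)))) := by
    intro n m
    have h2 : F (n, m) ^ (2:ℝ) = F (n, m) * F (n, m) := by
      rw [show (2:ℝ) = ((2:ℕ):ℝ) by norm_num, ENNReal.rpow_natCast, pow_two]
    rw [h2, hFdef, ← ENNReal.ofReal_mul (hFr0 n m)]
    congr 1
    have eY : Y n m ^ (-(D/4)) * Y n m ^ (-(D/4)) = Y n m ^ (-(D/2)) := by
      rw [← Real.rpow_add (hY0 n m)]; congr 1; ring
    have eUn1 : u n ^ (η/2) * u n ^ (η/2) = u n ^ η := by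
      rw [← Real.rpow_add (hu0 n)]; congr 1; ring
    have eUn2 : u n ^ ((t - 2*η)/4) * u n ^ ((t - 2*η)/4) = u n ^ ((t - 2*η)/2) := by
      rw [← Real.rpow_add (hu0 n)]; congr 1; ring
    have eUm : u m ^ (-(t/4)) * u m ^ (-(t/4)) = u m ^ (-(t/2)) := by
      rw [← Real.rpow_add (hu0 m)]; congr 1; ring
    calc Fr n m * Fr n m
        = (a n * a n) * (u n ^ (η/2) * u n ^ (η/2)) * (Y n m ^ (-(D/4)) * Y n m ^ (-(D/4)))
          * (u m ^ (-(t/4)) * u m ^ (-(t/4))) * (u n ^ ((t - 2*η)/4) * u n ^ ((t - 2*η)/4)) := by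
          simp only [hFrdef]; ring
      _ = (u n ^ η * a n ^ 2 * u n ^ ((t - 2*η)/2)) * (Y n m ^ (-(D/2)) * u m ^ (-(t/2))) := by
          rw [eY, eUn1, eUn2, eUm]; ring
  have hG2 : ∀ n m : ℕ, G (n, m) ^ (2:ℝ)
      = ENNReal.ofReal ((u m ^ η * b m ^ 2 * u m ^ ((t - 2*η)/2))
          * (Y n m ^ (-(D/2)) * u n ^ (-(t/2)))) := by
    intro n m
    have h2 : G (n, m) ^ (2:ℝ) = G (n, m) * G (n, m) := by
      rw [show (2:ℝ) = ((2:ℕ):ℝ) by norm_num, ENNReal.rpow_natCast, pow_two]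
    rw [h2, hGdef, ← ENNReal.ofReal_mul (hGr0 n m)]
    congr 1
    have eY : Y n m ^ (-(D/4)) * Y n m ^ (-(D/4)) = Y n m ^ (-(D/2)) := by
      rw [← Real.rpow_add (hY0 n m)]; congr 1; ring
    have eUm1 : u m ^ (η/2) * u m ^ (η/2) = u m ^ η := by
      rw [← Real.rpow_add (hu0 m)]; congr 1; ring
    have eUm2 : u m ^ ((t - 2*η)/4) * u m ^ ((t - 2*η)/4) = u m ^ ((t - 2*η)/2) := by
      rw [← Real.rpow_add (hu0 m)]; congr 1; ring
    have eUn : u n ^ (-(t/4)) * u n ^ (-(t/4)) = u n ^ (-(t/2)) := by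
      rw [← Real.rpow_add (hu0 n)]; congr 1; ring
    calc Gr n m * Gr n m
        = (b m * b m) * (u m ^ (η/2) * u m ^ (η/2)) * (Y n m ^ (-(D/4)) * Y n m ^ (-(D/4)))
          * (u n ^ (-(t/4)) * u n ^ (-(t/4))) * (u m ^ ((t - 2*η)/4) * u m ^ ((t - 2*η)/4)) := by
          simp only [hGrdef]; ring
      _ = (u m ^ η * b m ^ 2 * u m ^ ((t - 2*η)/2)) * (Y n m ^ (-(D/2)) * u n ^ (-(t/2))) := by
          rw [eY, eUm1, eUm2, eUn]; ring
  have collapse : ∀ k : ℕ, ∀ c : ℝ, 0 ≤ c →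
      ENNReal.ofReal (u k ^ η * c * u k ^ ((t - 2*η)/2)) * ENNReal.ofReal (C₀ * u k ^ (e/2))
        = ENNReal.ofReal (C₀ * (u k ^ η * c)) := by
    intro k c hc
    rw [← ENNReal.ofReal_mul (mul_nonneg (mul_nonneg (Real.rpow_nonneg (hu0 k).le _) hc)
      (Real.rpow_nonneg (hu0 k).le _))]
    congr 1
    have : u k ^ ((t - 2*η)/2) * u k ^ (e/2) = 1 := by
      rw [← Real.rpow_add (hu0 k), hedef, show (t - 2*η)/2 + (2*η - t)/2 = 0 by ring,
        Real.rpow_zero]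
    calc u k ^ η * c * u k ^ ((t - 2*η)/2) * (C₀ * u k ^ (e/2))
        = C₀ * (u k ^ η * c) * (u k ^ ((t - 2*η)/2) * u k ^ (e/2)) := by ring
      _ = C₀ * (u k ^ η * c) := by rw [this, mul_one]
  have boundF : (∑' p : ℕ × ℕ, F p ^ (2:ℝ))
      ≤ ENNReal.ofReal C₀ * ∑' n : ℕ, ENNReal.ofReal ((1 + (n:ℝ)^2) ^ η * a n ^ 2) := by
    calc ∑' p : ℕ × ℕ, F p ^ (2:ℝ) = ∑' n : ℕ, ∑' m : ℕ, F (n, m) ^ (2:ℝ) :=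
        ENNReal.tsum_prod'
      _ ≤ ∑' n : ℕ, ENNReal.ofReal (C₀ * (u n ^ η * a n ^ 2)) := by
          apply ENNReal.tsum_le_tsum
          intro n
          calc ∑' m : ℕ, F (n, m) ^ (2:ℝ)
              = ∑' m : ℕ, ENNReal.ofReal (u n ^ η * a n ^ 2 * u n ^ ((t - 2*η)/2))
                  * ENNReal.ofReal (Y n m ^ (-(D/2)) * u m ^ (-(t/2))) := by
                apply tsum_congr
                intro m
                rw [hF2 n m, ← ENNReal.ofReal_mul (mul_nonneg (mul_nonneg
                  (Real.rpow_nonneg (hu0 n).le _) (sq_nonneg _)) (Real.rpow_nonneg (hu0 n).le _))]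
            _ = ENNReal.ofReal (u n ^ η * a n ^ 2 * u n ^ ((t - 2*η)/2))
                  * ∑' m : ℕ, ENNReal.ofReal (Y n m ^ (-(D/2)) * u m ^ (-(t/2))) :=
                ENNReal.tsum_mul_left
            _ ≤ ENNReal.ofReal (u n ^ η * a n ^ 2 * u n ^ ((t - 2*η)/2))
                  * ENNReal.ofReal (C₀ * u n ^ (e/2)) :=
                mul_le_mul_right (rowF n) _
            _ = ENNReal.ofReal (C₀ * (u n ^ η * a n ^ 2)) :=
                collapse n (a n ^ 2) (sq_nonneg (a n))
      _ = ENNReal.ofReal C₀ * ∑' n : ℕ, ENNReal.ofReal ((1 + (n:ℝ)^2) ^ η * a n ^ 2) := by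
          rw [← ENNReal.tsum_mul_left]
          apply tsum_congr
          intro n
          rw [← ENNReal.ofReal_mul hC₀.le]
  have boundG : (∑' p : ℕ × ℕ, G p ^ (2:ℝ))
      ≤ ENNReal.ofReal C₀ * ∑' m : ℕ, ENNReal.ofReal ((1 + (m:ℝ)^2) ^ η * b m ^ 2) := by
    calc ∑' p : ℕ × ℕ, G p ^ (2:ℝ) = ∑' n : ℕ, ∑' m : ℕ, G (n, m) ^ (2:ℝ) :=
        ENNReal.tsum_prod'
      _ = ∑' m : ℕ, ∑' n : ℕ, G (n, m) ^ (2:ℝ) := ENNReal.tsum_comm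
      _ ≤ ∑' m : ℕ, ENNReal.ofReal (C₀ * (u m ^ η * b m ^ 2)) := by
          apply ENNReal.tsum_le_tsum
          intro m
          calc ∑' n : ℕ, G (n, m) ^ (2:ℝ)
              = ∑' n : ℕ, ENNReal.ofReal (u m ^ η * b m ^ 2 * u m ^ ((t - 2*η)/2))
                  * ENNReal.ofReal (Y n m ^ (-(D/2)) * u n ^ (-(t/2))) := by
                apply tsum_congr
                intro n
                rw [hG2 n m, ← ENNReal.ofReal_mul (mul_nonneg (mul_nonneg
                  (Real.rpow_nonneg (hu0 m).le _) (sq_nonneg _)) (Real.rpow_nonneg (hu0 m).le _))]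
            _ = ENNReal.ofReal (u m ^ η * b m ^ 2 * u m ^ ((t - 2*η)/2))
                  * ∑' n : ℕ, ENNReal.ofReal (Y n m ^ (-(D/2)) * u n ^ (-(t/2))) :=
                ENNReal.tsum_mul_left
            _ ≤ ENNReal.ofReal (u m ^ η * b m ^ 2 * u m ^ ((t - 2*η)/2))
                  * ENNReal.ofReal (C₀ * u m ^ (e/2)) :=
                mul_le_mul_right (rowG m) _
            _ = ENNReal.ofReal (C₀ * (u m ^ η * b m ^ 2)) :=
                collapse m (b m ^ 2) (sq_nonneg (b m))
      _ = ENNReal.ofReal C₀ * ∑' m : ℕ, ENNReal.ofReal ((1 + (m:ℝ)^2) ^ η * b m ^ 2) := by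
          rw [← ENNReal.tsum_mul_left]
          apply tsum_congr
          intro m
          rw [← ENNReal.ofReal_mul hC₀.le]
  -- Cauchy-Schwarz
  have conj : Real.HolderConjugate 2 2 := Real.HolderConjugate.two_two
  have hFm : AEMeasurable F MeasureTheory.Measure.count :=
    (measurable_of_countable F).aemeasurable
  have hGm : AEMeasurable G MeasureTheory.Measure.count :=
    (measurable_of_countable G).aemeasurable
  have CS : (∑' p : ℕ × ℕ, F p * G p)
      ≤ (∑' p : ℕ × ℕ, F p ^ (2:ℝ)) ^ ((1:ℝ)/2) * (∑' p : ℕ × ℕ, G p ^ (2:ℝ)) ^ ((1:ℝ)/2) := by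
    have h := ENNReal.lintegral_mul_le_Lp_mul_Lq MeasureTheory.Measure.count conj hFm hGm
    simpa [MeasureTheory.lintegral_count, Pi.mul_apply] using h
  -- assemble
  set Sa := ∑' n : ℕ, ENNReal.ofReal ((1 + (n:ℝ)^2) ^ η * a n ^ 2) with hSa
  set Sb := ∑' m : ℕ, ENNReal.ofReal ((1 + (m:ℝ)^2) ^ η * b m ^ 2) with hSb
  have hC0ne : ENNReal.ofReal C₀ ≠ 0 := (ENNReal.ofReal_pos.mpr hC₀).ne'
  have hC0top : ENNReal.ofReal C₀ ≠ ⊤ := ENNReal.ofReal_ne_top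
  have hxx : (ENNReal.ofReal C₀) ^ ((1:ℝ)/2) * (ENNReal.ofReal C₀) ^ ((1:ℝ)/2)
      = ENNReal.ofReal C₀ := by
    rw [← ENNReal.rpow_add _ _ hC0ne hC0top]
    norm_num
  calc ∑' n : ℕ, ∑' m : ℕ,
        ENNReal.ofReal (a n * b m / Real.sqrt (1 + ((n:ℝ) - (m:ℝ)) ^ 2) ^ δ)
      ≤ ∑' n : ℕ, ∑' m : ℕ, F (n, m) * G (n, m) :=
        ENNReal.tsum_le_tsum fun n => ENNReal.tsum_le_tsum fun m => pointwise n m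
    _ = ∑' p : ℕ × ℕ, F p * G p := (ENNReal.tsum_prod' (f := fun p => F p * G p)).symm
    _ ≤ (∑' p : ℕ × ℕ, F p ^ (2:ℝ)) ^ ((1:ℝ)/2) * (∑' p : ℕ × ℕ, G p ^ (2:ℝ)) ^ ((1:ℝ)/2) := CS
    _ ≤ (ENNReal.ofReal C₀ * Sa) ^ ((1:ℝ)/2) * (ENNReal.ofReal C₀ * Sb) ^ ((1:ℝ)/2) :=
        mul_le_mul' (ENNReal.rpow_le_rpow boundF (by norm_num))
          (ENNReal.rpow_le_rpow boundG (by norm_num))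
    _ = ENNReal.ofReal C₀ * Sa ^ ((1:ℝ)/2) * Sb ^ ((1:ℝ)/2) := by
        rw [ENNReal.mul_rpow_of_nonneg _ _ (by norm_num : (0:ℝ) ≤ 1/2),
          ENNReal.mul_rpow_of_nonneg _ _ (by norm_num : (0:ℝ) ≤ 1/2),
          mul_mul_mul_comm, hxx, ← mul_assoc]
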